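/- Let q^b be a square, V' = F_{q^b}^n with Hermitian form κ'(x,y) = Σ_i x_i y_i^{q^{b/2}} and H'(x) = κ'(x,x). Let T be a subset of F_{q^{b/2}}^*, D = {x ∈ V' : H'(x) ∈ T}, and for nonzero a ∈ V' define ψ_a(x) = ψ_{F_{q^b}}(κ'(a,x)). Then Σ_{x∈D} ψ_a(x) = (−1)^n · q^{(bn−b)/2} · Σ_{t∈T} K(ψ_{F_{q^{b/2}}}, t, H'(a)). -/

import Mathlib

/-- The canonical additive character `ψ_K(x) = exp(2πi·Tr_{K/F_p}(x)/p)` of a finite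
field `K` of characteristic `p`. -/
noncomputable def canChar (p : ℕ) (K : Type*) [Field K] [Fintype K] [Algebra (ZMod p) K]
    (x : K) : ℂ :=
  Complex.exp (2 * Real.pi * Complex.I * ((Algebra.trace (ZMod p) K x).val : ℂ) / (p : ℂ))

/-- The Kloosterman sum `K(ψ_F, a1, a2) = Σ_{x ∈ F^*} ψ_F(a1 x + a2 x^{-1})`. -/
noncomputable def kloosterman (p : ℕ) (F : Type*) [Field F] [Fintype F] [DecidableEq F]
    [Algebra (ZMod p) F] (a1 a2 : F) : ℂ :=
  ∑ x : Fˣ, canChar p F (a1 * (x : F) + a2 * (x : F)⁻¹)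



open Finset

section Chars
variable (p : ℕ) [Fact p.Prime] (K : Type*) [Field K] [Fintype K] [Algebra (ZMod p) K]

lemma canChar_eq_std (x : K) :
    canChar p K x = ZMod.stdAddChar (Algebra.trace (ZMod p) K x) := by
  have : NeZero p := ⟨(Fact.out : p.Prime).ne_zero⟩
  rw [ZMod.stdAddChar_apply, ZMod.toCircle_apply, canChar]

lemma canChar_add (x y : K) : canChar p K (x + y) = canChar p K x * canChar p K y := by
  simp [canChar_eq_std, map_add, AddChar.map_add_eq_mul]

lemma canChar_zero : canChar p K 0 = 1 := by
  simp [canChar_eq_std]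

lemma canChar_sum {ι : Type*} (s : Finset ι) (f : ι → K) :
    canChar p K (∑ i ∈ s, f i) = ∏ i ∈ s, canChar p K (f i) := by
  classical
  induction s using Finset.cons_induction with
  | empty => simp [canChar_zero]
  | cons i s hi ih => rw [Finset.sum_cons, Finset.prod_cons, canChar_add, ih]

lemma canChar_exists_ne_one {s : K} (hs : s ≠ 0) :
    ∃ u : K, canChar p K (u * s) ≠ 1 := by
  have h := traceForm_nondegenerate (ZMod p) K
  obtain ⟨b, hb⟩ : ∃ b, Algebra.trace (ZMod p) K (s * b) ≠ 0 := by
    by_contra h2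
    push_neg at h2
    exact hs (h.1 s (fun y => by simpa [Algebra.traceForm_apply] using h2 y))
  refine ⟨b, ?_⟩
  rw [mul_comm, canChar_eq_std]
  intro h1
  apply hb
  have : NeZero p := ⟨(Fact.out : p.Prime).ne_zero⟩
  have h2 : ZMod.toCircle (Algebra.trace (ZMod p) K (s * b)) = ZMod.toCircle (0 : ZMod p) := by
    ext
    rw [← ZMod.stdAddChar_apply, h1]
    simp
  exact ZMod.injective_toCircle h2

lemma sum_canChar_mul {s : K} (hs : s ≠ 0) :
    ∑ u : K, canChar p K (u * s) = 0 := by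
  obtain ⟨u₀, hu₀⟩ := canChar_exists_ne_one p K hs
  have key : ∑ u : K, canChar p K (u * s) = canChar p K (u₀ * s) * ∑ u : K, canChar p K (u * s) := by
    rw [Finset.mul_sum]
    calc ∑ u : K, canChar p K (u * s)
        = ∑ u : K, canChar p K ((u₀ + u) * s) :=
          (Fintype.sum_equiv (Equiv.addLeft u₀) _ _ (fun u => rfl)).symm
      _ = ∑ u : K, canChar p K (u₀ * s) * canChar p K (u * s) := by
          apply Finset.sum_congr rfl
          intro u _
          rw [add_mul, canChar_add]
  have : (canChar p K (u₀ * s) - 1) * ∑ u : K, canChar p K (u * s) = 0 := by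
    rw [sub_mul, one_mul, ← key, sub_self]
  rcases mul_eq_zero.mp this with h | h
  · exact absurd (sub_eq_zero.mp h) hu₀
  · exact h

end Chars



open Finset Polynomial

section RootCount
variable {E : Type*} [Field E] [Fintype E] [DecidableEq E]

lemma card_filter_root_le (q : Polynomial E) (hq : q ≠ 0) :
    (univ.filter fun x => q.eval x = 0).card ≤ q.natDegree := by
  have h1 : (univ.filter fun x => q.eval x = 0) ⊆ q.roots.toFinset := by
    intro x hx
    simp only [mem_filter, mem_univ, true_and] at hx
    simp [Multiset.mem_toFinset, mem_roots, hq, hx, IsRoot]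
  calc (univ.filter fun x => q.eval x = 0).card ≤ q.roots.toFinset.card := card_le_card h1
    _ ≤ Multiset.card q.roots := q.roots.toFinset_card_le
    _ ≤ q.natDegree := q.card_roots'

lemma card_filter_pow_eq_le (m : ℕ) (hm : m ≠ 0) (c : E) :
    (univ.filter fun x => x ^ m = c).card ≤ m := by
  have hdeg : ((X : Polynomial E) ^ m - C c).natDegree = m := natDegree_X_pow_sub_C
  have hq : ((X : Polynomial E) ^ m - C c) ≠ 0 := by
    intro h
    rw [h] at hdeg
    simp at hdeg
    exact hm hdeg.symm
  have := card_filter_root_le _ hq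
  rw [hdeg] at this
  refine le_trans (le_of_eq ?_) this
  congr 1
  ext x
  simp [sub_eq_zero]

lemma card_filter_fix_le (r : ℕ) (hr : 2 ≤ r) :
    (univ.filter fun x : E => x ^ r = x).card ≤ r := by
  have hdeg : ((X : Polynomial E) ^ r - X).natDegree = r := by
    rw [natDegree_sub_eq_left_of_natDegree_lt] <;> simp [natDegree_X_pow] <;> omega
  have hq : ((X : Polynomial E) ^ r - X) ≠ 0 := by
    intro h
    rw [h] at hdeg
    simp at hdeg
    omega
  have := card_filter_root_le _ hq
  rw [hdeg] at this
  refine le_trans (le_of_eq ?_) this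
  congr 1
  ext x
  simp [sub_eq_zero]

end RootCount

section EF
variable (p : ℕ) [Fact p.Prime] (F E : Type*) [Field F] [Field E]
    [Fintype F] [Fintype E] [DecidableEq F] [Algebra (ZMod p) F] [Algebra (ZMod p) E]
    [Algebra F E] [IsScalarTower (ZMod p) F E]
include p

/-- Frobenius (x ↦ x^{|F|}) is additive on E. -/
lemma frobE_add (x y : E) : (x + y) ^ Fintype.card F = x ^ Fintype.card F + y ^ Fintype.card F := by
  haveI : CharP F p := charP_of_injective_algebraMap (algebraMap (ZMod p) F).injective p
  haveI : CharP E p := charP_of_injective_algebraMap (algebraMap (ZMod p) E).injective p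
  haveI : ExpChar E p := ExpChar.prime Fact.out
  obtain ⟨k, _, hk⟩ := FiniteField.card F p
  rw [hk]
  exact add_pow_expChar_pow x y p k

lemma iotaE_pow (s : F) :
    (algebraMap F E s) ^ Fintype.card F = algebraMap F E s := by
  rw [← map_pow, FiniteField.pow_card]

variable (hcard : Fintype.card E = Fintype.card F ^ 2)
include hcard

lemma powE_card_card (x : E) : (x ^ Fintype.card F) ^ Fintype.card F = x := by
  rw [← pow_mul, ← sq, ← hcard, FiniteField.pow_card]

open Classical in
/-- Fixed points of Frobenius are in the image of F. -/
lemma exists_fixE (y : E) (hy : y ^ Fintype.card F = y) : ∃ s : F, algebraMap F E s = y := by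
  classical
  set r := Fintype.card F with hr
  have hr2 : 2 ≤ r := Fintype.one_lt_card
  have hinj : Function.Injective (algebraMap F E) := (algebraMap F E).injective
  have hsub : (univ.image (algebraMap F E)) ⊆ (univ.filter fun x : E => x ^ r = x) := by
    intro x hx
    simp only [mem_image] at hx
    obtain ⟨s, _, rfl⟩ := hx
    simp only [mem_filter, mem_univ, true_and]
    exact iotaE_pow p F E s
  have hcard1 : (univ.image (algebraMap F E)).card = r := by
    rw [card_image_of_injective _ hinj, card_univ]
  have hle : (univ.filter fun x : E => x ^ r = x).card ≤ r := card_filter_fix_le r hr2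
  have : (univ.image (algebraMap F E)) = (univ.filter fun x : E => x ^ r = x) :=
    eq_of_subset_of_card_le hsub (by omega)
  have hy' : y ∈ (univ.filter fun x : E => x ^ r = x) := by simp [mem_filter, hy]
  rw [← this] at hy'
  simp only [mem_image] at hy'
  obtain ⟨s, _, hs⟩ := hy'
  exact ⟨s, hs⟩

/-- The relative trace formula: Tr_{E/F}(z) = z + z^{|F|}. -/
lemma traceEF (z : E) :
    algebraMap F E (Algebra.trace F E z) = z + z ^ Fintype.card F := by
  classical
  set r := Fintype.card F with hr
  have hr2 : 2 ≤ r := Fintype.one_lt_card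
  -- finrank = 2
  have hrank : Module.finrank F E = 2 := by
    have h1 : Fintype.card E = Fintype.card F ^ Module.finrank F E := Module.card_eq_pow_finrank
    rw [hcard] at h1
    exact (Nat.pow_right_injective hr2 h1.symm)
  -- the Frobenius as an algebra equiv
  haveI : CharP F p := charP_of_injective_algebraMap (algebraMap (ZMod p) F).injective p
  haveI : CharP E p := charP_of_injective_algebraMap (algebraMap (ZMod p) E).injective p
  obtain ⟨k, hkp, hk⟩ := FiniteField.card F p
  have hfrob : ∀ x : E, (iterateFrobenius E p k) x = x ^ r := by
    intro x; rw [iterateFrobenius_def, hr, hk]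
  have hcomm : ∀ (c : F) (x : E), (iterateFrobenius E p k) (c • x) = c • (iterateFrobenius E p k) x := by
    intro c x
    rw [hfrob, hfrob, Algebra.smul_def, Algebra.smul_def, mul_pow, iotaE_pow p F E]
  let f : E →ₐ[F] E := AlgHom.mk' (iterateFrobenius E p k) hcomm
  have hfbij : Function.Bijective f :=
    (Finite.injective_iff_bijective).mp (RingHom.injective (f : E →+* E))
  let φ : E ≃ₐ[F] E := AlgEquiv.ofBijective f hfbij
  have hφ : ∀ x : E, φ x = x ^ r := fun x => hfrob x
  -- φ ≠ 1
  have hne : (1 : E ≃ₐ[F] E) ≠ φ := by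
    intro h
    have hall : ∀ x : E, x ^ r = x := by
      intro x
      have := congrArg (fun σ : E ≃ₐ[F] E => σ x) h
      simpa [hφ] using this.symm
    have : (univ.filter fun x : E => x ^ r = x) = univ := by
      ext x; simp [hall]
    have h1 := card_filter_fix_le (E := E) r hr2
    rw [this, card_univ, hcard] at h1
    nlinarith
  -- the automorphism group is {1, φ}
  have hcardaut : Fintype.card (E ≃ₐ[F] E) = 2 := by
    rw [← Nat.card_eq_fintype_card, IsGalois.card_aut_eq_finrank, hrank]
  have huniv : (univ : Finset (E ≃ₐ[F] E)) = {1, φ} := by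
    symm
    apply eq_of_subset_of_card_le (subset_univ _)
    rw [card_univ, hcardaut, card_insert_of_notMem (by simpa using hne), card_singleton]
  rw [trace_eq_sum_automorphisms, huniv, Finset.sum_pair hne]
  simp [hφ]

/-- Transfer the canonical character along the trace. -/
lemma canCharE_eq_F (z : E) (s : F) (h : algebraMap F E s = z + z ^ Fintype.card F) :
    canChar p E z = canChar p F s := by
  have hs : s = Algebra.trace F E z :=
    (algebraMap F E).injective (by rw [h, traceEF p F E hcard])
  rw [hs]
  unfold canChar
  rw [Algebra.trace_trace]

end EF
section Nu
open Finset
variable (F E : Type*) [Field F] [Field E] [Fintype F] [Fintype E] [Algebra F E]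

open Classical in
/-- Partial inverse of `algebraMap F E`. -/
noncomputable def nuEF (y : E) : F :=
  if h : ∃ s : F, algebraMap F E s = y then h.choose else 0

lemma nuEF_iota (s : F) : nuEF F E (algebraMap F E s) = s := by
  have h : ∃ s' : F, algebraMap F E s' = algebraMap F E s := ⟨s, rfl⟩
  rw [nuEF]
  rw [dif_pos h]
  exact (algebraMap F E).injective h.choose_spec

end Nu

section EF2
open Finset
variable (p : ℕ) [Fact p.Prime] (F E : Type*) [Field F] [Field E]
    [Fintype F] [Fintype E] [DecidableEq F] [Algebra (ZMod p) F] [Algebra (ZMod p) E]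
    [Algebra F E] [IsScalarTower (ZMod p) F E]
include p
variable (hcard : Fintype.card E = Fintype.card F ^ 2)
include hcard

lemma nuEF_spec (y : E) (hy : y ^ Fintype.card F = y) :
    algebraMap F E (nuEF F E y) = y := by
  obtain ⟨s, hs⟩ := exists_fixE p F E hcard y hy
  rw [← hs, nuEF_iota, hs]

lemma frobE_sum {ι : Type*} (s : Finset ι) (f : ι → E) :
    (∑ i ∈ s, f i) ^ Fintype.card F = ∑ i ∈ s, f i ^ Fintype.card F := by
  classical
  induction s using Finset.cons_induction with
  | empty => simp [zero_pow, Fintype.card_ne_zero]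
  | cons i s hi ih => rw [Finset.sum_cons, Finset.sum_cons, frobE_add p F E, ih]

/-- `x^(r+1)` is fixed by Frobenius. -/
lemma norm_fix (x : E) :
    (x ^ (Fintype.card F + 1)) ^ Fintype.card F = x ^ (Fintype.card F + 1) := by
  rw [← pow_mul, show (Fintype.card F + 1) * Fintype.card F
        = Fintype.card F * Fintype.card F + Fintype.card F from by ring,
    pow_add, pow_mul, powE_card_card p F E hcard, pow_succ, mul_comm]

lemma card_norm_fiber [DecidableEq E] (s : F) (hs : s ≠ 0) :
    (univ.filter fun x : E => x ^ (Fintype.card F + 1) = algebraMap F E s).card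
      = Fintype.card F + 1 := by
  classical
  set r := Fintype.card F with hr
  have hr2 : 2 ≤ r := Fintype.one_lt_card
  set ι := algebraMap F E with hι
  have hinj : Function.Injective ι := ι.injective
  set g : E → F := fun x => nuEF F E (x ^ (r + 1)) with hg
  have key : ∀ x : E, ι (g x) = x ^ (r + 1) :=
    fun x => nuEF_spec p F E hcard _ (norm_fix p F E hcard x)
  -- fibers over nonzero s are exactly the solution sets
  have hfib : ∀ s₀ : F, s₀ ≠ 0 →
      (univ.filter fun x : E => x ≠ 0).filter (fun x => g x = s₀)
        = univ.filter fun x : E => x ^ (r + 1) = ι s₀ := by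
    intro s₀ hs₀
    ext x
    simp only [mem_filter, mem_univ, true_and]
    constructor
    · rintro ⟨-, rfl⟩; exact (key x).symm
    · intro h
      have hx0 : x ≠ 0 := by
        rintro rfl
        apply hs₀
        apply hinj
        rw [← h, map_zero]
        simp [zero_pow]
      exact ⟨hx0, hinj (by rw [key, h])⟩
  have hmaps : ∀ x ∈ univ.filter (fun x : E => x ≠ 0), g x ∈ univ.filter (fun s : F => s ≠ 0) := by
    intro x hx
    simp only [mem_filter, mem_univ, true_and] at hx ⊢
    intro h0
    have := key x
    rw [h0, map_zero] at this
    exact pow_ne_zero _ hx this.symm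
  have hcount := Finset.card_eq_sum_card_fiberwise hmaps
  have hcardE : (univ.filter fun x : E => x ≠ 0).card = r ^ 2 - 1 := by
    have : (univ.filter fun x : E => x ≠ 0) = univ.erase 0 := by ext x; simp
    rw [this, card_erase_of_mem (mem_univ 0), card_univ, hcard]
  have hcardF : (univ.filter fun s : F => s ≠ 0).card = r - 1 := by
    have : (univ.filter fun s : F => s ≠ 0) = univ.erase 0 := by ext x; simp
    rw [this, card_erase_of_mem (mem_univ 0), card_univ]
  have hub : ∀ s₀ ∈ univ.filter (fun s : F => s ≠ 0),
      ((univ.filter fun x : E => x ≠ 0).filter (fun x => g x = s₀)).card ≤ r + 1 := by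
    intro s₀ hs₀
    simp only [mem_filter, mem_univ, true_and] at hs₀
    rw [hfib s₀ hs₀]
    exact card_filter_pow_eq_le (r + 1) (by omega) _
  -- all fibers have exactly r+1 elements
  have hexact : ∀ s₀ ∈ univ.filter (fun s : F => s ≠ 0),
      ((univ.filter fun x : E => x ≠ 0).filter (fun x => g x = s₀)).card = r + 1 := by
    by_contra hcon
    push_neg at hcon
    obtain ⟨s₀, hs₀, hne⟩ := hcon
    have hlt : ((univ.filter fun x : E => x ≠ 0).filter (fun x => g x = s₀)).card < r + 1 :=
      lt_of_le_of_ne (hub s₀ hs₀) hne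
    have hsum : ∑ s₀ ∈ univ.filter (fun s : F => s ≠ 0),
        ((univ.filter fun x : E => x ≠ 0).filter (fun x => g x = s₀)).card
        < ∑ _s₀ ∈ univ.filter (fun s : F => s ≠ 0), (r + 1) :=
      Finset.sum_lt_sum hub ⟨s₀, hs₀, hlt⟩
    rw [← hcount, hcardE, Finset.sum_const, hcardF, smul_eq_mul] at hsum
    have h1 : 1 ≤ r := by omega
    zify [h1, show 1 ≤ r^2 by nlinarith] at hsum
    nlinarith
  have := hexact s (by simp [hs])
  rwa [hfib s hs] at this

end EF2
section GSum
open Finset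
variable (p : ℕ) [Fact p.Prime] {K : Type*} [Field K] [Fintype K] [Algebra (ZMod p) K]

lemma sum_canChar_ite [DecidableEq K] (s : K) :
    ∑ u : K, canChar p K (u * s) = if s = 0 then (Fintype.card K : ℂ) else 0 := by
  split_ifs with h
  · subst h; simp [canChar_zero, card_univ]
  · exact sum_canChar_mul p K h

end GSum

section GSum2
open Finset
variable (p : ℕ) [Fact p.Prime] (F E : Type*) [Field F] [Field E]
    [Fintype F] [Fintype E] [DecidableEq F] [Algebra (ZMod p) F] [Algebra (ZMod p) E]
    [Algebra F E] [IsScalarTower (ZMod p) F E]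
    (hcard : Fintype.card E = Fintype.card F ^ 2)
include p hcard

lemma G_sum (u : F) (hu : u ≠ 0) :
    ∑ x : E, canChar p F (u * nuEF F E (x ^ (Fintype.card F + 1)))
      = -(Fintype.card F : ℂ) := by
  classical
  set r := Fintype.card F with hr
  set g : E → F := fun x => nuEF F E (x ^ (r + 1)) with hg
  have key : ∀ x : E, algebraMap F E (g x) = x ^ (r + 1) :=
    fun x => nuEF_spec p F E hcard _ (norm_fix p F E hcard x)
  have hpart : ∑ x : E, canChar p F (u * g x)
      = ∑ s : F, ∑ x ∈ univ.filter (fun x : E => g x = s), canChar p F (u * g x) :=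
    (Finset.sum_fiberwise_of_maps_to (fun x _ => mem_univ (g x)) _).symm
  rw [hpart]
  have hconst : ∀ s : F, ∑ x ∈ univ.filter (fun x : E => g x = s), canChar p F (u * g x)
      = ((univ.filter (fun x : E => g x = s)).card : ℂ) * canChar p F (u * s) := by
    intro s
    rw [Finset.sum_congr rfl (fun x hx => by
      simp only [mem_filter] at hx
      rw [hx.2]), Finset.sum_const, nsmul_eq_mul]
  have hfib0 : (univ.filter (fun x : E => g x = 0)) = {0} := by
    ext x
    simp only [mem_filter, mem_univ, true_and, mem_singleton]
    constructor
    · intro h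
      have := key x
      rw [h, map_zero] at this
      exact pow_eq_zero_iff (by omega) |>.mp this.symm
    · rintro rfl
      apply (algebraMap F E).injective
      rw [key, map_zero, zero_pow (by omega : r + 1 ≠ 0)]
  have hfibs : ∀ s : F, s ≠ 0 → (univ.filter (fun x : E => g x = s)).card = r + 1 := by
    intro s hs
    have hset : (univ.filter (fun x : E => g x = s))
        = univ.filter (fun x : E => x ^ (r + 1) = algebraMap F E s) := by
      ext x
      simp only [mem_filter, mem_univ, true_and]
      constructor
      · rintro rfl; exact (key x).symm
      · intro h; exact (algebraMap F E).injective (by rw [key, h])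
    rw [hset]
    exact card_norm_fiber p F E hcard s hs
  calc ∑ s : F, ∑ x ∈ univ.filter (fun x : E => g x = s), canChar p F (u * g x)
      = ∑ s : F, ((univ.filter (fun x : E => g x = s)).card : ℂ) * canChar p F (u * s) :=
        Finset.sum_congr rfl (fun s _ => hconst s)
    _ = ∑ s : F, ((r + 1 : ℂ) - if s = 0 then (r : ℂ) else 0) * canChar p F (u * s) := by
        apply Finset.sum_congr rfl
        intro s _
        congr 1
        by_cases hs : s = 0
        · subst hs; rw [hfib0]; simp
        · rw [hfibs s hs]; simp [hs]
    _ = (r + 1 : ℂ) * ∑ s : F, canChar p F (u * s)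
          - ∑ s : F, (if s = 0 then (r : ℂ) else 0) * canChar p F (u * s) := by
        rw [Finset.mul_sum, ← Finset.sum_sub_distrib]
        exact Finset.sum_congr rfl fun s _ => by ring
    _ = -(r : ℂ) := by
        have h1 : ∑ s : F, canChar p F (u * s) = 0 := by
          have := sum_canChar_mul p F hu
          rw [← this]
          exact Finset.sum_congr rfl (fun s _ => by rw [mul_comm])
        rw [h1, mul_zero, zero_sub]
        congr 1
        rw [Finset.sum_eq_single 0]
        · simp [canChar_zero]
        · intro b _ hb; simp [hb]
        · simp

lemma g_sum (u : F) (hu : u ≠ 0) (c : E) :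
    ∑ x : E, canChar p F (u * nuEF F E (x ^ (Fintype.card F + 1)))
        * canChar p E (c * x ^ Fintype.card F)
      = -(Fintype.card F : ℂ)
          * canChar p F (-(nuEF F E (c ^ (Fintype.card F + 1)) * u⁻¹)) := by
  classical
  set r := Fintype.card F with hr
  set ι := algebraMap F E with hι
  have hinj : Function.Injective ι := ι.injective
  have hιu : ι u ≠ 0 := fun h => hu (hinj (by rw [h, map_zero]))
  have hNfix : ∀ z : E, (z ^ (r + 1)) ^ r = z ^ (r + 1) := norm_fix p F E hcard
  have hkey : ∀ z : E, ι (nuEF F E (z ^ (r + 1))) = z ^ (r + 1) :=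
    fun z => nuEF_spec p F E hcard _ (hNfix z)
  -- the F-element representing the E-character value
  set t : E → F := fun x => nuEF F E (c * x ^ r + c ^ r * x) with ht
  have htfix : ∀ x : E, (c * x ^ r + c ^ r * x) ^ r = c * x ^ r + c ^ r * x := by
    intro x
    rw [frobE_add p F E, mul_pow, mul_pow, powE_card_card p F E hcard,
      powE_card_card p F E hcard]
    ring
  have htkey : ∀ x : E, ι (t x) = c * x ^ r + c ^ r * x :=
    fun x => nuEF_spec p F E hcard _ (htfix x)
  have hchar : ∀ x : E, canChar p E (c * x ^ r) = canChar p F (t x) := by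
    intro x
    apply canCharE_eq_F p F E hcard
    rw [htkey, mul_pow, ← pow_mul, mul_comm r r, pow_mul, powE_card_card p F E hcard]
  set w : E := c * (ι u)⁻¹ with hw
  -- completing the square
  have hsq : ∀ x : E, u * nuEF F E (x ^ (r + 1)) + t x
      = u * nuEF F E ((x + w) ^ (r + 1)) + -(nuEF F E (c ^ (r + 1)) * u⁻¹) := by
    intro x
    apply hinj
    have hcfix : ι (nuEF F E (c ^ (r + 1))) = c ^ (r + 1) := hkey c
    have hwr : w ^ r = c ^ r * (ι u)⁻¹ := by
      rw [hw, mul_pow, inv_pow, iotaE_pow p F E]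
    have hexp : (x + w) ^ (r + 1) = (x ^ r + w ^ r) * (x + w) := by
      rw [pow_succ, frobE_add p F E]
    push_cast [map_add, map_mul, map_neg, map_inv₀, hkey, htkey]
    rw [hexp, hwr, hw]
    field_simp
    ring
  calc ∑ x : E, canChar p F (u * nuEF F E (x ^ (r + 1))) * canChar p E (c * x ^ r)
      = ∑ x : E, canChar p F (u * nuEF F E ((x + w) ^ (r + 1)))
          * canChar p F (-(nuEF F E (c ^ (r + 1)) * u⁻¹)) := by
        apply Finset.sum_congr rfl
        intro x _
        rw [hchar, ← canChar_add, hsq, canChar_add]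
    _ = (∑ x : E, canChar p F (u * nuEF F E (x ^ (r + 1))))
          * canChar p F (-(nuEF F E (c ^ (r + 1)) * u⁻¹)) := by
        rw [Finset.sum_mul]
        exact Fintype.sum_equiv (Equiv.addRight w) _ _ (fun x => rfl)
    _ = -(r : ℂ) * canChar p F (-(nuEF F E (c ^ (r + 1)) * u⁻¹)) := by
        rw [G_sum p F E hcard u hu]

end GSum2

open Finset in
open Classical in
/-- Let `E = F_{q^b}` of square order, `F = F_{q^{b/2}}` its index-2 subfield
(`r := |F| = q^{b/2}`), `V' = E^n` with Hermitian form `κ'(x,y) = Σ_i x_i y_i^r`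
and `H'(x) = κ'(x,x) ∈ F`.  For a subset `T ⊆ F^*`, `D = {x : H'(x) ∈ T}`, and a
nonzero `a ∈ V'` with `H'(a)` (as an element of `F`):
`Σ_{x∈D} ψ_E(κ'(a,x)) = (−1)^n · r^{n−1} · Σ_{t∈T} K(ψ_F, t, H'(a))`. -/
theorem stmt8 (p : ℕ) [Fact p.Prime] (F E : Type*) [Field F] [Field E]
    [Fintype F] [Fintype E] [DecidableEq F] [Algebra (ZMod p) F] [Algebra (ZMod p) E]
    [Algebra F E] [IsScalarTower (ZMod p) F E]
    (hcard : Fintype.card E = Fintype.card F ^ 2)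
    (n : ℕ) (T : Finset F) (hT : ∀ t ∈ T, t ≠ 0)
    (a : Fin n → E) (ha : a ≠ 0)
    (H'a : F) (hH'a : algebraMap F E H'a = ∑ i, a i * a i ^ Fintype.card F) :
    ∑ x ∈ (Finset.univ.filter fun x : Fin n → E =>
        (∑ i, x i * x i ^ Fintype.card F) ∈ T.image (algebraMap F E)),
      canChar p E (∑ i, a i * x i ^ Fintype.card F)
    = (-1 : ℂ) ^ n * (Fintype.card F : ℂ) ^ (n - 1) *
        ∑ t ∈ T, kloosterman p F t H'a := by
  classical
  obtain _ | m := n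
  · exact absurd (_root_.funext fun i => i.elim0) ha
  set r := Fintype.card F with hr
  set ι := algebraMap F E with hι
  have hinj : Function.Injective ι := ι.injective
  have hr0 : (r : ℂ) ≠ 0 := Nat.cast_ne_zero.mpr Fintype.card_ne_zero
  set ν : E → F := nuEF F E with hν
  have hkey : ∀ z : E, ι (ν (z ^ (r + 1))) = z ^ (r + 1) :=
    fun z => nuEF_spec p F E hcard _ (norm_fix p F E hcard z)
  set g : (Fin (m + 1) → E) → F := fun x => ∑ i, ν (x i ^ (r + 1)) with hg
  have hgkey : ∀ x : Fin (m + 1) → E, ι (g x) = ∑ i, x i * x i ^ r := by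
    intro x
    rw [hg, map_sum]
    exact Finset.sum_congr rfl fun i _ => by rw [hkey, pow_succ']
  -- Step A : rewrite the filtering condition
  have hfilter : (univ.filter fun x : Fin (m + 1) → E =>
        (∑ i, x i * x i ^ Fintype.card F) ∈ T.image (algebraMap F E))
      = univ.filter fun x => g x ∈ T := by
    ext x
    simp only [mem_filter, mem_univ, true_and, mem_image]
    constructor
    · rintro ⟨t, htT, ht⟩
      rwa [show t = g x from hinj (by rw [ht, hgkey])] at htT
    · intro h
      exact ⟨g x, h, hgkey x⟩
  rw [hfilter]
  set ψE : E → ℂ := canChar p E with hψE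
  set ψF : F → ℂ := canChar p F with hψF
  set κ : (Fin (m + 1) → E) → ℂ := fun x => ψE (∑ i, a i * x i ^ r) with hκ
  -- Step B : split by the value of g
  have hsplit : ∑ x ∈ univ.filter (fun x => g x ∈ T), κ x
      = ∑ t ∈ T, ∑ x ∈ univ.filter (fun x => g x = t), κ x := by
    rw [← Finset.sum_fiberwise_of_maps_to (g := g) (t := T)
      (fun x hx => (mem_filter.mp hx).2) κ]
    apply Finset.sum_congr rfl
    intro t htT
    apply Finset.sum_congr _ (fun _ _ => rfl)
    ext x
    simp only [mem_filter, mem_univ, true_and]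
    exact ⟨fun h => h.2, fun h => ⟨h.symm ▸ htT, h⟩⟩
  -- Step C : character detection of the fibers
  have hdet : ∀ (t : F), (r : ℂ) * ∑ x ∈ univ.filter (fun x => g x = t), κ x
      = ∑ x : Fin (m + 1) → E, (∑ u : F, ψF (u * (g x - t))) * κ x := by
    intro t
    have h1 : ∀ x : Fin (m + 1) → E, (∑ u : F, ψF (u * (g x - t)))
        = if g x = t then (r : ℂ) else 0 := by
      intro x
      rw [hψF, sum_canChar_ite p (g x - t)]
      simp [sub_eq_zero, hr]
    calc (r : ℂ) * ∑ x ∈ univ.filter (fun x => g x = t), κ x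
        = ∑ x ∈ univ.filter (fun x => g x = t), (r : ℂ) * κ x := by rw [Finset.mul_sum]
      _ = ∑ x : Fin (m + 1) → E, if g x = t then (r : ℂ) * κ x else 0 := by
          rw [Finset.sum_filter]
      _ = ∑ x : Fin (m + 1) → E, (∑ u : F, ψF (u * (g x - t))) * κ x := by
          apply Finset.sum_congr rfl
          intro x _
          rw [h1 x]
          by_cases h : g x = t <;> simp [h]
  -- the inner sum over x for fixed u factors through coordinates
  set A : F → ℂ := fun u => ∑ x : Fin (m + 1) → E, ψF (u * g x) * κ x with hA
  have hAfact : ∀ u : F,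
      A u = ∏ i, ∑ y : E, ψF (u * ν (y ^ (r + 1))) * ψE (a i * y ^ r) := by
    intro u
    rw [Finset.prod_univ_sum (fun _ : Fin (m + 1) => (univ : Finset E))
      (fun i y => ψF (u * ν (y ^ (r + 1))) * ψE (a i * y ^ r)), Fintype.piFinset_univ]
    apply Finset.sum_congr rfl
    intro x _
    rw [Finset.prod_mul_distrib]
    congr 1
    · rw [hψF, hg, Finset.mul_sum, canChar_sum]
    · exact canChar_sum p E univ (fun i => a i * x i ^ r)
  -- vanishing at u = 0
  have hA0 : A 0 = 0 := by
    obtain ⟨i₀, hi₀⟩ : ∃ i, a i ≠ 0 := by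
      by_contra hcon
      push_neg at hcon
      exact ha (_root_.funext hcon)
    rw [hAfact 0]
    apply Finset.prod_eq_zero (mem_univ i₀)
    have hb : ∀ y : E, ψF (0 * ν (y ^ (r + 1))) * ψE (a i₀ * y ^ r) = ψE (a i₀ * y ^ r) := by
      intro y
      rw [zero_mul, hψF, canChar_zero, one_mul]
    rw [Finset.sum_congr rfl (fun y _ => hb y)]
    have hbij : Function.Bijective (fun y : E => y ^ r) := by
      have hinv : Function.Involutive (fun y : E => y ^ r) :=
        fun y => powE_card_card p F E hcard y
      exact hinv.bijective
    rw [Fintype.sum_bijective _ hbij _ (fun y : E => ψE (a i₀ * y)) (fun y => rfl)]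
    rw [hψE, ← sum_canChar_mul p E hi₀]
    exact Finset.sum_congr rfl fun y _ => by rw [mul_comm]
  -- value at u ≠ 0
  have hAne : ∀ u : F, u ≠ 0 → A u = (-(r : ℂ)) ^ (m + 1) * ψF (-(H'a * u⁻¹)) := by
    intro u hu
    have hsumν : ∑ i, ν (a i ^ (r + 1)) = H'a := by
      apply hinj
      rw [map_sum, hH'a]
      exact Finset.sum_congr rfl fun i _ => by rw [hkey, pow_succ']
    rw [hAfact u]
    have : ∀ i : Fin (m + 1), ∑ y : E, ψF (u * ν (y ^ (r + 1))) * ψE (a i * y ^ r)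
        = -(r : ℂ) * ψF (-(ν (a i ^ (r + 1)) * u⁻¹)) := by
      intro i
      exact g_sum p F E hcard u hu (a i)
    rw [Finset.prod_congr rfl (fun i _ => this i), Finset.prod_mul_distrib,
      Finset.prod_const, card_univ, Fintype.card_fin]
    congr 1
    rw [hψF, ← canChar_sum]
    congr 1
    rw [← hsumν, Finset.sum_neg_distrib, ← Finset.sum_mul]
  -- assemble everything
  have hmain : (r : ℂ) * ∑ x ∈ univ.filter (fun x => g x ∈ T), κ x
      = (-(r : ℂ)) ^ (m + 1) * ∑ t ∈ T, kloosterman p F t H'a := by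
    rw [hsplit, Finset.mul_sum]
    rw [Finset.sum_congr rfl (fun t _ => hdet t)]
    have hswap : ∀ t : F, ∑ x : Fin (m + 1) → E, (∑ u : F, ψF (u * (g x - t))) * κ x
        = ∑ u : F, ψF (-(u * t)) * A u := by
      intro t
      calc ∑ x : Fin (m + 1) → E, (∑ u : F, ψF (u * (g x - t))) * κ x
          = ∑ x : Fin (m + 1) → E, ∑ u : F, ψF (u * (g x - t)) * κ x :=
            Finset.sum_congr rfl fun x _ => by rw [Finset.sum_mul]
        _ = ∑ u : F, ∑ x : Fin (m + 1) → E, ψF (u * (g x - t)) * κ x := Finset.sum_comm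
        _ = ∑ u : F, ψF (-(u * t)) * A u := by
            apply Finset.sum_congr rfl
            intro u _
            rw [hA, Finset.mul_sum]
            apply Finset.sum_congr rfl
            intro x _
            rw [hψF, show u * (g x - t) = -(u * t) + u * g x from by ring, canChar_add]
            ring
    rw [Finset.sum_congr rfl (fun t _ => hswap t)]
    have hpoint : ∀ t : F, ∑ u : F, ψF (-(u * t)) * A u
        = (-(r : ℂ)) ^ (m + 1) * kloosterman p F t H'a := by
      intro t
      rw [← Finset.add_sum_erase _ _ (mem_univ (0 : F))]
      rw [hA0, mul_zero, zero_add]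
      have h2 : ∀ u ∈ univ.erase (0 : F), ψF (-(u * t)) * A u
          = (-(r : ℂ)) ^ (m + 1) * ψF (-(u * t) + -(H'a * u⁻¹)) := by
        intro u hu
        have hu0 : u ≠ 0 := (mem_erase.mp hu).1
        rw [hAne u hu0, hψF, canChar_add]
        ring
      rw [Finset.sum_congr rfl h2, ← Finset.mul_sum]
      congr 1
      -- reindex u = -v over units
      rw [kloosterman]
      apply Finset.sum_bij' (i := fun (u : F) (hu : u ∈ univ.erase 0) =>
          Units.mk0 (-u) (neg_ne_zero.mpr (Finset.mem_erase.mp hu).1))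
        (j := fun (v : Fˣ) _ => -(v : F))
      · intro u hu; exact mem_univ _
      · intro u hu; simp
      · intro v _; ext; simp
      · intro u hu
        rw [hψF]
        congr 1
        simp only [Units.val_mk0]
        rw [← neg_inv]
        ring
      · intro v _; simp
    rw [Finset.sum_congr rfl (fun t htT => hpoint t), ← Finset.mul_sum]
  -- conclude
  apply mul_left_cancel₀ hr0
  rw [hmain]
  have hm1 : (m + 1) - 1 = m := rfl
  rw [hm1]
  ring
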